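/- arXiv:1404.5668 — 3 statements merged into one kernel-verified Lean document; each statement's English description precedes it below -/
import Mathlib

section
/- Under the conditions of the KL Legendre-Fenchel lemma, the minimizing cost function is C*(x) = (1/β) log(p(x)/(β·p0(x))) for x with p(x) > 0, i.e., C* satisfies p(x) = β·p0(x)·exp(β·C*(x)) and achieves the minimum of ∑_x (-p(x)C(x) + p0(x)exp(βC(x))). -/
open Real Finset

theorem kl_legendre_fenchel_minimizer
    (X : Type*) [Fintype X] [Nonempty X]
    (p p0 : X → ℝ) (β : ℝ)
    (hp : ∀ x, 0 < p x) (hp1 : ∑ x, p x = 1)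
    (hp0 : ∀ x, 0 < p0 x) (hp01 : ∑ x, p0 x = 1)
    (hβ : 0 < β)
    (Cstar : X → ℝ)
    (hC : ∀ x, Cstar x = (1/β) * Real.log (p x / (β * p0 x))) :
    (∀ x, p x = β * p0 x * Real.exp (β * Cstar x)) ∧
    (∀ C : X → ℝ,
      (∑ x, (-(p x * Cstar x) + p0 x * Real.exp (β * Cstar x)))
        ≤ ∑ x, (-(p x * C x) + p0 x * Real.exp (β * C x))) := by
  have key : ∀ x, p x = β * p0 x * Real.exp (β * Cstar x) := by
    intro x
    have hpos : 0 < p x / (β * p0 x) := div_pos (hp x) (mul_pos hβ (hp0 x))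
    have h1 : β * Cstar x = Real.log (p x / (β * p0 x)) := by
      rw [hC x]; field_simp
    rw [h1, Real.exp_log hpos]
    field_simp [hβ.ne', (hp0 x).ne']
  refine ⟨key, fun C => ?_⟩
  apply Finset.sum_le_sum
  intro x _
  have hx := key x
  have hconv : Real.exp (β * Cstar x) * (β * C x - β * Cstar x + 1)
      ≤ Real.exp (β * C x) := by
    have := Real.add_one_le_exp (β * C x - β * Cstar x)
    calc Real.exp (β * Cstar x) * (β * C x - β * Cstar x + 1)
        ≤ Real.exp (β * Cstar x) * Real.exp (β * C x - β * Cstar x) := by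
          exact mul_le_mul_of_nonneg_left this (Real.exp_pos _).le
      _ = Real.exp (β * C x) := by rw [← Real.exp_add]; ring_nf
  have h2 := mul_le_mul_of_nonneg_left hconv (hp0 x).le
  rw [hx]; nlinarith [h2]
end

section
/- The maximum value of the free energy F_β[p] over probability distributions p equals (1/β)·log(∑_x p0(x)·exp(β·U(x))). -/
open Real Finset

theorem free_energy_max_value
    (X : Type*) [Fintype X] [Nonempty X]
    (U : X → ℝ) (p0 : X → ℝ) (β : ℝ)
    (hp0 : ∀ x, 0 < p0 x) (hp01 : ∑ x, p0 x = 1) (hβ : 0 < β) :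
    IsGreatest
      {v : ℝ | ∃ p : X → ℝ, (∀ x, 0 ≤ p x) ∧ (∑ x, p x = 1) ∧
        v = (∑ x, p x * U x) - (1/β) * ∑ x, p x * Real.log (p x / p0 x)}
      ((1/β) * Real.log (∑ x, p0 x * Real.exp (β * U x))) := by
  set Z := ∑ x, p0 x * Real.exp (β * U x) with hZ
  have hZpos : 0 < Z :=
    Finset.sum_pos (fun x _ => mul_pos (hp0 x) (Real.exp_pos _)) univ_nonempty
  set q : X → ℝ := fun x => p0 x * Real.exp (β * U x) / Z with hq
  have hqpos : ∀ x, 0 < q x := fun x => div_pos (mul_pos (hp0 x) (Real.exp_pos _)) hZpos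
  have hqsum : ∑ x, q x = 1 := by
    rw [hq, ← Finset.sum_div]
    exact div_self hZpos.ne'
  have hqlogval : ∀ x, Real.log (q x) = Real.log (p0 x) + β * U x - Real.log Z := by
    intro x
    rw [hq]
    rw [Real.log_div (mul_ne_zero (hp0 x).ne' (Real.exp_ne_zero _)) hZpos.ne',
      Real.log_mul (hp0 x).ne' (Real.exp_ne_zero _), Real.log_exp]
  constructor
  · refine ⟨q, fun x => (hqpos x).le, hqsum, ?_⟩
    have hterm : ∀ x, q x * Real.log (q x / p0 x) = β * (q x * U x) - q x * Real.log Z := by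
      intro x
      rw [Real.log_div (hqpos x).ne' (hp0 x).ne', hqlogval x]
      ring
    rw [Finset.sum_congr rfl (fun x _ => hterm x), Finset.sum_sub_distrib,
      ← Finset.mul_sum, ← Finset.sum_mul, hqsum, one_mul]
    field_simp
    ring
  · rintro v ⟨p, hp, hps, rfl⟩
    set S := ∑ x, p x * Real.log (p x / p0 x) with hS
    set T := ∑ x, p x * U x with hT
    -- KL divergence nonnegativity: ∑ p log(p/q) ≥ 0
    have hkey : ∀ x, p x - q x ≤ p x * Real.log (p x / q x) := by
      intro x
      rcases eq_or_lt_of_le (hp x) with h | h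
      · simp [← h, (hqpos x).le]
      · have h1 : Real.log (q x / p x) ≤ q x / p x - 1 :=
          Real.log_le_sub_one_of_pos (div_pos (hqpos x) h)
        have h2 : Real.log (p x / q x) = -Real.log (q x / p x) := by
          rw [← Real.log_inv, inv_div]
        rw [h2]
        have := mul_le_mul_of_nonneg_left h1 h.le
        have he : p x * (q x / p x - 1) = q x - p x := by field_simp
        nlinarith
    have hsum : 0 ≤ ∑ x, p x * Real.log (p x / q x) := by
      have := Finset.sum_le_sum (fun x (_ : x ∈ univ) => hkey x)
      rw [Finset.sum_sub_distrib, hps, hqsum] at this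
      linarith
    have hterm : ∀ x, p x * Real.log (p x / q x) =
        p x * Real.log (p x / p0 x) - β * (p x * U x) + p x * Real.log Z := by
      intro x
      rcases eq_or_lt_of_le (hp x) with h | h
      · simp [← h]
      · rw [Real.log_div h.ne' (hqpos x).ne', Real.log_div h.ne' (hp0 x).ne', hqlogval x]
        ring
    rw [Finset.sum_congr rfl (fun x _ => hterm x), Finset.sum_add_distrib,
      Finset.sum_sub_distrib, ← Finset.mul_sum, ← Finset.sum_mul, hps, one_mul,
      ← hS, ← hT] at hsum
    -- hsum : 0 ≤ S - β * T + log Z ; goal : T - (1/β) * S ≤ (1/β) * log Z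
    have hgoal : β * (T - 1/β * S) ≤ β * (1/β * Real.log Z) := by
      have e1 : β * (T - 1/β * S) = β * T - S := by field_simp
      have e2 : β * (1/β * Real.log Z) = Real.log Z := by field_simp
      rw [e1, e2]; linarith
    exact le_of_mul_le_mul_left hgoal hβ
end

section
/- For β > 0 the saddle point value satisfies max_p min_C [∑_x p(x)(U(x)-C(x)) + ∑_x p0(x)exp(βC(x))] = min_C max_p [∑_x p(x)(U(x)-C(x)) + ∑_x p0(x)exp(βC(x))], i.e., the max and min can be exchanged with no duality gap. -/
open Real Finset

private lemma tangent_ineq {β p q t : ℝ} (hβ : 0 < β) (hp : 0 ≤ p) (hq : 0 < q) :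
    p / β * (1 - Real.log (p / (β * q))) ≤ -(p * t) + q * Real.exp (β * t) := by
  rcases eq_or_lt_of_le hp with h0 | h0
  · rw [← h0]
    simp
    positivity
  · have hpq : 0 < p / (β * q) := by positivity
    set s := Real.log (p / (β * q)) with hs
    have h2 := Real.add_one_le_exp (β * t - s)
    have h3 : q * Real.exp (β * t) = p / β * Real.exp (β * t - s) := by
      rw [Real.exp_sub, Real.exp_log hpq]
      field_simp
    have hpb : 0 < p / β := by positivity
    have h5 : p / β * (β * t - s + 1) = p * t + p / β * (1 - s) := by
      field_simp
      ring
    have h6 := mul_le_mul_of_nonneg_left h2 hpb.le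
    linarith

theorem minimax_no_duality_gap
    (X : Type*) [Fintype X] [Nonempty X]
    (U : X → ℝ) (p0 : X → ℝ) (β : ℝ)
    (hp0 : ∀ x, 0 < p0 x) (hp01 : ∑ x, p0 x = 1) (hβ : 0 < β) :
    sSup {v : ℝ | ∃ p : X → ℝ, (∀ x, 0 ≤ p x) ∧ (∑ x, p x = 1) ∧
        v = ⨅ C : X → ℝ,
          ((∑ x, p x * (U x - C x)) + ∑ x, p0 x * Real.exp (β * C x))}
      =
    ⨅ C : X → ℝ,
      sSup {v : ℝ | ∃ p : X → ℝ, (∀ x, 0 ≤ p x) ∧ (∑ x, p x = 1) ∧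
        v = (∑ x, p x * (U x - C x)) + ∑ x, p0 x * Real.exp (β * C x)} := by
  classical
  set Z : ℝ := ∑ x, p0 x * Real.exp (β * U x) with hZdef
  have hZpos : 0 < Z := Finset.sum_pos (fun x _ => mul_pos (hp0 x) (Real.exp_pos _)) univ_nonempty
  set c : ℝ := -(1 / β) * Real.log (β * Z) with hcdef
  have hec : Real.exp (β * c) = 1 / (β * Z) := by
    have hbc : β * c = -Real.log (β * Z) := by
      rw [hcdef]; field_simp
    rw [hbc, Real.exp_neg, Real.exp_log (mul_pos hβ hZpos), one_div]
  set v : ℝ := -c + Real.exp (β * c) * Z with hvdef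
  have hvL : v = 1 / β + 1 / β * Real.log (β * Z) := by
    rw [hvdef, hec, hcdef]
    field_simp
    ring
  set ps : X → ℝ := fun x => p0 x * Real.exp (β * U x) / Z with hpsdef
  have hps_pos : ∀ x, 0 < ps x := fun x => div_pos (mul_pos (hp0 x) (Real.exp_pos _)) hZpos
  have hps_nonneg : ∀ x, 0 ≤ ps x := fun x => (hps_pos x).le
  have hps_sum : ∑ x, ps x = 1 := by
    rw [hpsdef]
    rw [← Finset.sum_div, ← hZdef]
    exact div_self hZpos.ne'
  -- lower bound on f(p, C) uniform in C
  have hlow : ∀ p : X → ℝ, (∀ x, 0 ≤ p x) → ∀ C : X → ℝ,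
      (∑ x, p x * U x) + ∑ x, p x / β * (1 - Real.log (p x / (β * p0 x)))
        ≤ (∑ x, p x * (U x - C x)) + ∑ x, p0 x * Real.exp (β * C x) := by
    intro p hp C
    have h2 : ∑ x, p x / β * (1 - Real.log (p x / (β * p0 x)))
        ≤ ∑ x, (-(p x * C x) + p0 x * Real.exp (β * C x)) :=
      Finset.sum_le_sum fun x _ => tangent_ineq hβ (hp x) (hp0 x)
    have e1 : ∑ x, p x * (U x - C x) = (∑ x, p x * U x) - ∑ x, p x * C x := by
      rw [← Finset.sum_sub_distrib]
      exact Finset.sum_congr rfl fun x _ => by ring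
    have e2 : ∑ x, (-(p x * C x) + p0 x * Real.exp (β * C x))
        = -(∑ x, p x * C x) + ∑ x, p0 x * Real.exp (β * C x) := by
      rw [Finset.sum_add_distrib, Finset.sum_neg_distrib]
    rw [e2] at h2
    rw [e1]
    linarith
  -- value at C* = U + c is exactly v for every feasible p
  have hCstar : ∀ p : X → ℝ, (∑ x, p x = 1) →
      (∑ x, p x * (U x - (U x + c))) + ∑ x, p0 x * Real.exp (β * (U x + c)) = v := by
    intro p hp1
    have e1 : ∑ x, p x * (U x - (U x + c)) = -c := by
      have : ∀ x ∈ univ, p x * (U x - (U x + c)) = p x * (-c) := fun x _ => by ring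
      rw [Finset.sum_congr rfl this, ← Finset.sum_mul, hp1, one_mul]
    have e2 : ∑ x, p0 x * Real.exp (β * (U x + c)) = Real.exp (β * c) * Z := by
      rw [hZdef, Finset.mul_sum]
      exact Finset.sum_congr rfl fun x _ => by
        rw [mul_add, Real.exp_add]; ring
    rw [e1, e2, hvdef]
  -- key inequality: v ≤ f(ps, C) for all C
  have hkey : ∀ C : X → ℝ,
      v ≤ (∑ x, ps x * (U x - C x)) + ∑ x, p0 x * Real.exp (β * C x) := by
    intro C
    refine le_trans ?_ (hlow ps hps_nonneg C)
    have e3 : ∀ x ∈ univ, ps x / β * (1 - Real.log (ps x / (β * p0 x)))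
        = ps x * (1 / β + 1 / β * Real.log (β * Z) - U x) := by
      intro x _
      have hx : ps x / (β * p0 x) = Real.exp (β * U x) / (β * Z) := by
        rw [hpsdef]
        rw [div_div, div_eq_div_iff (mul_ne_zero hZpos.ne' (mul_ne_zero hβ.ne' (hp0 x).ne'))
          (mul_ne_zero hβ.ne' hZpos.ne')]
        ring
      rw [hx, Real.log_div (Real.exp_ne_zero _) (mul_pos hβ hZpos).ne', Real.log_exp]
      have hgen : ∀ a u : ℝ, a / β * (1 - (β * u - Real.log (β * Z)))
          = a * (1 / β + 1 / β * Real.log (β * Z) - u) := by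
        intro a u
        field_simp
        ring
      exact hgen (ps x) (U x)
    have e4 : ∑ x, ps x / β * (1 - Real.log (ps x / (β * p0 x)))
        = (1 / β + 1 / β * Real.log (β * Z)) - ∑ x, ps x * U x := by
      rw [Finset.sum_congr rfl e3]
      have : ∀ x ∈ univ, ps x * (1 / β + 1 / β * Real.log (β * Z) - U x)
          = ps x * (1 / β + 1 / β * Real.log (β * Z)) - ps x * U x := fun x _ => by ring
      rw [Finset.sum_congr rfl this, Finset.sum_sub_distrib, ← Finset.sum_mul, hps_sum, one_mul]
    rw [e4, hvL]
    linarith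
  -- the function C ↦ f(p,C) is bounded below
  have hBB : ∀ p : X → ℝ, (∀ x, 0 ≤ p x) → BddBelow (Set.range fun C : X → ℝ =>
      (∑ x, p x * (U x - C x)) + ∑ x, p0 x * Real.exp (β * C x)) := by
    intro p hp
    refine ⟨(∑ x, p x * U x) + ∑ x, p x / β * (1 - Real.log (p x / (β * p0 x))), ?_⟩
    rintro w ⟨C, rfl⟩
    exact hlow p hp C
  -- every element of the sup set on the left is ≤ v
  have hmemS_le : ∀ w ∈ {v : ℝ | ∃ p : X → ℝ, (∀ x, 0 ≤ p x) ∧ (∑ x, p x = 1) ∧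
      v = ⨅ C : X → ℝ,
        ((∑ x, p x * (U x - C x)) + ∑ x, p0 x * Real.exp (β * C x))}, w ≤ v := by
    rintro w ⟨p, hp, hp1, rfl⟩
    refine le_trans (ciInf_le (hBB p hp) (fun x => U x + c)) ?_
    exact (hCstar p hp1).le
  have hSne : ∃ w, w ∈ {v : ℝ | ∃ p : X → ℝ, (∀ x, 0 ≤ p x) ∧ (∑ x, p x = 1) ∧
      v = ⨅ C : X → ℝ,
        ((∑ x, p x * (U x - C x)) + ∑ x, p0 x * Real.exp (β * C x))} :=
    ⟨_, ps, hps_nonneg, hps_sum, rfl⟩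
  -- each right-hand set is bounded above
  have hGbdd : ∀ C : X → ℝ, BddAbove {v : ℝ | ∃ p : X → ℝ, (∀ x, 0 ≤ p x) ∧ (∑ x, p x = 1) ∧
      v = (∑ x, p x * (U x - C x)) + ∑ x, p0 x * Real.exp (β * C x)} := by
    intro C
    refine ⟨(univ.sup' univ_nonempty fun x => U x - C x) + ∑ x, p0 x * Real.exp (β * C x), ?_⟩
    rintro w ⟨p, hp, hp1, rfl⟩
    have : ∑ x, p x * (U x - C x) ≤ univ.sup' univ_nonempty fun x => U x - C x := by
      calc ∑ x, p x * (U x - C x)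
          ≤ ∑ x, p x * (univ.sup' univ_nonempty fun x => U x - C x) :=
            Finset.sum_le_sum fun x _ =>
              mul_le_mul_of_nonneg_left (Finset.le_sup' (fun x => U x - C x) (Finset.mem_univ x)) (hp x)
        _ = univ.sup' univ_nonempty fun x => U x - C x := by
            rw [← Finset.sum_mul, hp1, one_mul]
    linarith
  -- v ≤ sSup (G C) for every C
  have hvleG : ∀ C : X → ℝ, v ≤ sSup {v : ℝ | ∃ p : X → ℝ, (∀ x, 0 ≤ p x) ∧ (∑ x, p x = 1) ∧
      v = (∑ x, p x * (U x - C x)) + ∑ x, p0 x * Real.exp (β * C x)} := by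
    intro C
    exact le_trans (hkey C) (le_csSup (hGbdd C) ⟨ps, hps_nonneg, hps_sum, rfl⟩)
  apply le_antisymm
  · exact le_trans (csSup_le hSne hmemS_le) (le_ciInf hvleG)
  · have hb : BddBelow (Set.range fun C : X → ℝ =>
        sSup {v : ℝ | ∃ p : X → ℝ, (∀ x, 0 ≤ p x) ∧ (∑ x, p x = 1) ∧
          v = (∑ x, p x * (U x - C x)) + ∑ x, p0 x * Real.exp (β * C x)}) := by
      refine ⟨v, ?_⟩
      rintro w ⟨C, rfl⟩
      exact hvleG C
    refine le_trans (ciInf_le hb (fun x => U x + c))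
      (le_trans ?_ (le_csSup ⟨v, hmemS_le⟩ ⟨ps, hps_nonneg, hps_sum, rfl⟩))
    refine le_trans (csSup_le ⟨_, ps, hps_nonneg, hps_sum, rfl⟩ ?_) (le_ciInf hkey)
    rintro w ⟨p, hp, hp1, rfl⟩
    simpa using (hCstar p hp1).le
end
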